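/- For every odd prime p there exist elements a, b, c of SL(2,F_p) with a of order 3, b of order 3, c of order 4, and a*b*c = 1. -/

import Mathlib

open Matrix

private lemma cube_eq_one_of_cayley {R : Type*} [CommRing R]
    (M : Matrix (Fin 2) (Fin 2) R) (h : M * M = -M - 1) : M ^ 3 = 1 := by
  calc M ^ 3 = (M * M) * M := by rw [pow_succ, pow_two]
    _ = (-M - 1) * M := by rw [h]
    _ = -(M * M) - M := by noncomm_ring
    _ = -(-M - 1) - M := by rw [h]
    _ = 1 := by noncomm_ring

private lemma cube_mat {R : Type*} [CommRing R] (x y z w : R)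
    (hdet : x * w - y * z = 1) (htr : x + w = -1) :
    (!![x, y; z, w]) ^ 3 = 1 := by
  apply cube_eq_one_of_cayley
  ext i j
  fin_cases i <;> fin_cases j <;>
    simp [Matrix.mul_apply, Fin.sum_univ_succ, Matrix.one_apply] <;>
    first
      | linear_combination x * htr - hdet
      | linear_combination y * htr
      | linear_combination z * htr
      | linear_combination w * htr - hdet

/-- For every odd prime p there exist elements a, b, c of SL(2, F_p) of orders
3, 3 and 4 respectively with a * b * c = 1. -/
theorem exists_elements_orders_three_three_four (p : ℕ) (hp : p.Prime) (hodd : p ≠ 2) :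
    ∃ a b c : Matrix.SpecialLinearGroup (Fin 2) (ZMod p),
      orderOf a = 3 ∧ orderOf b = 3 ∧ orderOf c = 4 ∧ a * b * c = 1 := by
  haveI : Fact p.Prime := ⟨hp⟩
  have h2 : (2 : ZMod p) ≠ 0 := by
    intro h
    have hdvd : p ∣ 2 := (ZMod.natCast_eq_zero_iff 2 p).mp (by exact_mod_cast h)
    exact hodd ((Nat.prime_dvd_prime_iff_eq hp Nat.prime_two).mp hdvd)
  have h1 : (1 : ZMod p) ≠ 0 := one_ne_zero
  obtain ⟨s, t, hst⟩ := ZMod.sq_add_sq p (-2 : ZMod p)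
  obtain ⟨x, y, z, w, hdet, htr, hyz⟩ :
      ∃ x y z w : ZMod p, x * w - y * z = 1 ∧ x + w = -1 ∧ y - z = 1 := by
    have hu2 : (2 : ZMod p)⁻¹ * 2 = 1 := by field_simp
    set u : ZMod p := (2 : ZMod p)⁻¹
    refine ⟨u * (t - 1), u * (s + 1), u * (s - 1), -u * (t + 1), ?_, ?_, ?_⟩
    · linear_combination (-(u*u)) * hst + (2*u + 1) * hu2
    · linear_combination (-1 : ZMod p) * hu2
    · linear_combination hu2
  have hdetA : Matrix.det !![x, y; z, w] = 1 := by
    rw [Matrix.det_fin_two_of]; linear_combination hdet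
  have hdetB : Matrix.det !![-y, -w; x, z] = 1 := by
    rw [Matrix.det_fin_two_of]; linear_combination hdet
  have hdetC : Matrix.det !![(0 : ZMod p), 1; -1, 0] = 1 := by
    rw [Matrix.det_fin_two_of]; ring
  set A : Matrix.SpecialLinearGroup (Fin 2) (ZMod p) := ⟨_, hdetA⟩ with hA
  set B : Matrix.SpecialLinearGroup (Fin 2) (ZMod p) := ⟨_, hdetB⟩ with hB
  set C : Matrix.SpecialLinearGroup (Fin 2) (ZMod p) := ⟨_, hdetC⟩ with hC
  refine ⟨A, B, C, ?_, ?_, ?_, ?_⟩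
  · refine orderOf_eq_prime ?_ ?_
    · apply Subtype.ext
      rw [Matrix.SpecialLinearGroup.coe_pow, Matrix.SpecialLinearGroup.coe_one]
      exact cube_mat x y z w hdet htr
    · intro hAe
      have h01 := congrArg (fun M : Matrix.SpecialLinearGroup (Fin 2) (ZMod p) =>
        (M : Matrix (Fin 2) (Fin 2) (ZMod p)) 0 1) hAe
      have h10 := congrArg (fun M : Matrix.SpecialLinearGroup (Fin 2) (ZMod p) =>
        (M : Matrix (Fin 2) (Fin 2) (ZMod p)) 1 0) hAe
      simp [hA, Matrix.SpecialLinearGroup.coe_one, Matrix.one_apply] at h01 h10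
      exact h1 (by linear_combination h01 - h10 - hyz)
  · refine orderOf_eq_prime ?_ ?_
    · apply Subtype.ext
      rw [Matrix.SpecialLinearGroup.coe_pow, Matrix.SpecialLinearGroup.coe_one]
      exact cube_mat (-y) (-w) x z (by linear_combination hdet)
        (by linear_combination -hyz)
    · intro hBe
      have h01 := congrArg (fun M : Matrix.SpecialLinearGroup (Fin 2) (ZMod p) =>
        (M : Matrix (Fin 2) (Fin 2) (ZMod p)) 0 1) hBe
      have h10 := congrArg (fun M : Matrix.SpecialLinearGroup (Fin 2) (ZMod p) =>
        (M : Matrix (Fin 2) (Fin 2) (ZMod p)) 1 0) hBe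
      simp [hB, Matrix.SpecialLinearGroup.coe_one, Matrix.one_apply] at h01 h10
      exact h1 (by linear_combination htr - h01 - h10)
  · have h4 : orderOf C = 2 ^ (1 + 1) := by
      refine orderOf_eq_prime_pow ?_ ?_
      · intro hC2
        have h00 := congrArg (fun M : Matrix.SpecialLinearGroup (Fin 2) (ZMod p) =>
          (M : Matrix (Fin 2) (Fin 2) (ZMod p)) 0 0) hC2
        change ((!![(0 : ZMod p), 1; -1, 0]) ^ 2) 0 0 = (1 : Matrix (Fin 2) (Fin 2) (ZMod p)) 0 0 at h00
        simp [hC, Matrix.SpecialLinearGroup.coe_pow, Matrix.SpecialLinearGroup.coe_one,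
          pow_two, Matrix.SpecialLinearGroup.coe_mul, Matrix.mul_apply,
          Fin.sum_univ_succ, Matrix.one_apply] at h00
        exact h2 (by linear_combination -h00)
      · apply Subtype.ext
        rw [Matrix.SpecialLinearGroup.coe_pow, Matrix.SpecialLinearGroup.coe_one]
        show (!![(0 : ZMod p), 1; -1, 0]) ^ (2 ^ 2) = 1
        norm_num [pow_succ, Matrix.mul_fin_two]
        ext i j
        fin_cases i <;> fin_cases j <;> simp [Matrix.one_apply]
    rw [h4]; norm_num
  · apply Subtype.ext
    change !![x, y; z, w] * !![-y, -w; x, z] * !![(0 : ZMod p), 1; -1, 0] = 1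
    simp only [hA, hB, hC, Matrix.SpecialLinearGroup.coe_mul,
      Matrix.SpecialLinearGroup.coe_one, Matrix.mul_fin_two]
    ext i j
    fin_cases i <;> fin_cases j <;>
      simp [Matrix.one_apply] <;>
      first
        | linear_combination hdet
        | linear_combination -hdet
        | ring
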